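/- For r with |r − 1| < 1 and f_r = S⁻¹(x ↦ r^x), the exponential generating function of (f_r(n))_{n≥0} equals exp(rt)/(1 − t) as formal power series. -/

import Mathlib

open Filter Finset

/-- The canonical embedding `ℤ_[p] → K` (where `K` plays the role of `ℂ_p`,
a complete nontrivially normed field extension of `ℚ_[p]`). -/
noncomputable def pc (p : ℕ) [Fact p.Prime] (K : Type*) [NontriviallyNormedField K]
    [NormedAlgebra ℚ_[p] K] (x : ℤ_[p]) : K :=
  algebraMap ℚ_[p] K x

/-- The operator `S` : `S(f)(x) = f(x) - x·f(x-1)`. -/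
noncomputable def Sop (p : ℕ) [Fact p.Prime] (K : Type*) [NontriviallyNormedField K]
    [NormedAlgebra ℚ_[p] K] (f : ℤ_[p] → K) : ℤ_[p] → K :=
  fun x => f x - pc p K x * f (x - 1)

/-- The Mahler basis function `βₙ(x) = C(x,n) = x(x-1)⋯(x-n+1)/n!`, valued in `K`. -/
noncomputable def bK (p : ℕ) [Fact p.Prime] (K : Type*) [NontriviallyNormedField K]
    [NormedAlgebra ℚ_[p] K] (n : ℕ) (x : ℤ_[p]) : K :=
  (∏ i ∈ Finset.range n, (pc p K x - (i : K))) / (n.factorial : K)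

lemma pc_natCast (p : ℕ) [Fact p.Prime] (K : Type*) [NontriviallyNormedField K]
    [NormedAlgebra ℚ_[p] K] (n : ℕ) : pc p K (n : ℤ_[p]) = (n : K) := by
  simp [pc]

lemma bK_natCast (p : ℕ) [Fact p.Prime] (K : Type*) [NontriviallyNormedField K]
    [NormedAlgebra ℚ_[p] K] (k n : ℕ) :
    bK p K k (n : ℤ_[p]) = if k ≤ n then (n.choose k : K) else 0 := by
  haveI : CharZero K := charZero_of_injective_algebraMap (algebraMap ℚ_[p] K).injective
  unfold bK
  rw [pc_natCast]
  split_ifs with h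
  · have : (∏ i ∈ Finset.range k, ((n : K) - (i : K))) = ((n.descFactorial k : ℕ) : K) := by
      rw [Nat.descFactorial_eq_prod_range, Nat.cast_prod]
      refine Finset.prod_congr rfl fun i hi => ?_
      have : i ≤ n := le_trans (Nat.le_of_lt_succ (Nat.lt_succ_of_lt (Finset.mem_range.1 hi))) h
      rw [Nat.cast_sub this]
    rw [this, Nat.descFactorial_eq_factorial_mul_choose, Nat.cast_mul,
      mul_div_assoc, mul_comm, div_mul_cancel₀ _ (Nat.cast_ne_zero.2 k.factorial_ne_zero)]
  · rw [Finset.prod_eq_zero (Finset.mem_range.2 (not_le.mp h)) (by simp), zero_div]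

/-- For `r` with `‖r - 1‖ < 1` and `f_r = S⁻¹(x ↦ rˣ)`, the
exponential generating function of `(f_r(n))ₙ` equals `exp(rt)/(1 - t)` as a
formal power series. -/
theorem stmt_14 (p : ℕ) [Fact p.Prime] (K : Type*) [NontriviallyNormedField K]
    [NormedAlgebra ℚ_[p] K] [CompleteSpace K]
    (r : K) (hr : ‖r - 1‖ < 1)
    (f : ℤ_[p] → K) (hf : Continuous f)
    (hSf : Sop p K f = fun x : ℤ_[p] => ∑' n : ℕ, (r - 1) ^ n * bK p K n x) :
    PowerSeries.mk (fun n : ℕ => f (n : ℤ_[p]) / (n.factorial : K))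
      = PowerSeries.mk (fun n : ℕ => r ^ n / (n.factorial : K))
          * (1 - PowerSeries.X : PowerSeries K)⁻¹ := by
  haveI : CharZero K := charZero_of_injective_algebraMap (algebraMap ℚ_[p] K).injective
  -- the key identity: S(f)(n) = r^n for natural n
  have hS : ∀ n : ℕ, f (n : ℤ_[p]) - (n : K) * f ((n : ℤ_[p]) - 1) = r ^ n := by
    intro n
    have h1 := congrFun hSf (n : ℤ_[p])
    simp only [Sop, pc_natCast] at h1
    rw [h1]
    have hsum : (∑' k : ℕ, (r - 1) ^ k * bK p K k (n : ℤ_[p]))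
        = ∑ k ∈ Finset.range (n + 1), (r - 1) ^ k * (n.choose k : K) := by
      rw [tsum_eq_sum (s := Finset.range (n + 1))]
      · exact Finset.sum_congr rfl fun k hk => by
          rw [bK_natCast, if_pos (Nat.lt_succ_iff.1 (Finset.mem_range.1 hk))]
      · intro k hk
        rw [bK_natCast, if_neg (by simpa using fun h => hk (Finset.mem_range.2 (Nat.lt_succ_of_le h))), mul_zero]
    rw [hsum]
    have := add_pow (r - 1) 1 n
    simp only [one_pow, mul_one] at this
    rw [sub_add_cancel] at this
    rw [← this]
  -- initial value and recurrence
  have h0 : f (0 : ℤ_[p]) = 1 := by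
    have := hS 0
    simpa using this
  have hrec : ∀ n : ℕ, f ((n + 1 : ℕ) : ℤ_[p]) = ((n : K) + 1) * f ((n : ℕ) : ℤ_[p]) + r ^ (n + 1) := by
    intro n
    have := hS (n + 1)
    push_cast at this ⊢
    have harg : ((n : ℤ_[p]) + 1) - 1 = (n : ℤ_[p]) := by ring
    rw [harg] at this
    linear_combination this
  rw [PowerSeries.eq_mul_inv_iff_mul_eq (by simp)]
  ext n
  rw [mul_sub, mul_one, map_sub, PowerSeries.coeff_mk]
  cases n with
  | zero => simp [h0]
  | succ n =>
    rw [PowerSeries.coeff_succ_mul_X, PowerSeries.coeff_mk, PowerSeries.coeff_mk, hrec n]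
    have hfac : ((n + 1).factorial : K) = ((n : K) + 1) * (n.factorial : K) := by
      rw [Nat.factorial_succ]; push_cast; ring
    have hn1 : ((n : K) + 1) ≠ 0 := by
      exact_mod_cast (Nat.cast_ne_zero (R := K)).2 (Nat.succ_ne_zero n)
    have hfn : ((n.factorial : K)) ≠ 0 := Nat.cast_ne_zero.2 n.factorial_ne_zero
    rw [hfac]
    field_simp
    ring
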